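/- Let X be a nonzero Banach space which is L-embedded, i.e., X** = X ⊕₁ Z for some closed subspace Z of X** (under the canonical embedding of X into X**, with the sum being an ℓ¹-sum of norms). If the closed unit ball of X has no extreme points, then X* has the Daugavet property. -/

import Mathlib

open Filter Metric NormedSpace

/-- A Banach space `X` has the Daugavet property if every rank-one operator
satisfies `‖Id + T‖ = 1 + ‖T‖`. -/
def DaugavetProperty (X : Type*) [NormedAddCommGroup X] [NormedSpace ℝ X] : Prop :=
  ∀ T : X →L[ℝ] X, (∃ (f : X →L[ℝ] ℝ) (y : X), T = f.smulRight y) →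
    ‖ContinuousLinearMap.id ℝ X + T‖ = 1 + ‖T‖

/-- For a real functional and any `δ > 0`, there is a vector in the unit ball where the
functional nearly attains its norm (with the correct sign). -/
lemma exists_unit_near_norm {E : Type*} [NormedAddCommGroup E] [NormedSpace ℝ E]
    (f : E →L[ℝ] ℝ) {δ : ℝ} (hδ : 0 < δ) : ∃ u : E, ‖u‖ ≤ 1 ∧ ‖f‖ - δ < f u := by
  obtain ⟨x, hx, hfx⟩ := f.exists_lt_apply_of_lt_opNorm (show ‖f‖ - δ < ‖f‖ by linarith)
  rcases le_or_gt 0 (f x) with h | h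
  · exact ⟨x, hx.le, by rwa [Real.norm_eq_abs, abs_of_nonneg h] at hfx⟩
  · refine ⟨-x, by simpa using hx.le, ?_⟩
    rw [map_neg]
    rwa [Real.norm_eq_abs, abs_of_neg h] at hfx

set_option maxHeartbeats 1000000 in
theorem stmt2 {X : Type*} [NormedAddCommGroup X] [NormedSpace ℝ X] [CompleteSpace X]
    [Nontrivial X]
    (Z : Submodule ℝ (StrongDual ℝ (StrongDual ℝ X))) (hZc : IsClosed (Z : Set (StrongDual ℝ (StrongDual ℝ X))))
    (hdec : ∀ F : StrongDual ℝ (StrongDual ℝ X), ∃! p : X × Z,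
      F = inclusionInDoubleDual ℝ X p.1 + (p.2 : StrongDual ℝ (StrongDual ℝ X)))
    (hnorm : ∀ (x : X) (z : Z),
      ‖inclusionInDoubleDual ℝ X x + (z : StrongDual ℝ (StrongDual ℝ X))‖ = ‖x‖ + ‖(z : StrongDual ℝ (StrongDual ℝ X))‖)
    (hext : Set.extremePoints ℝ (closedBall (0 : X) 1) = ∅) :
    DaugavetProperty (StrongDual ℝ X) := by
  classical
  set J : X →L[ℝ] StrongDual ℝ (StrongDual ℝ X) := inclusionInDoubleDual ℝ X with hJdef
  have normJ : ∀ x : X, ‖J x‖ = ‖x‖ := by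
    intro x
    have := hnorm x 0
    simp at this
    rw [this]
    exact add_eq_left.2 (norm_zero (E := StrongDual ℝ (StrongDual ℝ X)))
  -- Y is nontrivial
  haveI hYnt : Nontrivial (StrongDual ℝ X) := by
    obtain ⟨x, hx⟩ := exists_ne (0 : X)
    obtain ⟨f, hf1, hfx⟩ := exists_dual_vector ℝ x (norm_ne_zero_iff.2 hx)
    refine ⟨f, 0, fun h => ?_⟩
    have hne : f x ≠ 0 := by
      rw [hfx]
      exact_mod_cast norm_ne_zero_iff.2 hx
    exact hne (by rw [h]; rfl)
  -- the weak-star closed unit ball of the bidual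
  set B : Set (WeakDual ℝ (StrongDual ℝ X)) := WeakDual.toStrongDual ⁻¹' closedBall 0 1 with hBdef
  have hBcomp : IsCompact B := WeakDual.isCompact_closedBall (𝕜 := ℝ) (E := StrongDual ℝ X) 0 1
  have hBconv : Convex ℝ B :=
    (convex_closedBall (0 : StrongDual ℝ (StrongDual ℝ X)) 1).linear_preimage
      (WeakDual.toStrongDual (𝕜 := ℝ) (E := StrongDual ℝ X)).toLinearMap
  set BZ : Set (WeakDual ℝ (StrongDual ℝ X)) := B ∩ (WeakDual.toStrongDual ⁻¹' (Z : Set (StrongDual ℝ (StrongDual ℝ X)))) with hBZdef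
  have hBZconv : Convex ℝ BZ :=
    hBconv.inter (Z.convex.linear_preimage (WeakDual.toStrongDual (𝕜 := ℝ) (E := StrongDual ℝ X)).toLinearMap)
  -- all extreme points of B lie in Z
  have hextB : B.extremePoints ℝ ⊆ BZ := by
    rintro F hF
    have hFB : F ∈ B := hF.1
    set G : StrongDual ℝ (StrongDual ℝ X) := WeakDual.toStrongDual F with hGdef
    obtain ⟨⟨x, z⟩, hxz, huniq⟩ := hdec G
    simp only at hxz
    have hGnorm : ‖G‖ ≤ 1 := by
      rwa [hBdef, Set.mem_preimage, mem_closedBall_zero_iff (E := StrongDual ℝ (StrongDual ℝ X))] at hFB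
    have hGeq : ‖G‖ = ‖x‖ + ‖(z : StrongDual ℝ (StrongDual ℝ X))‖ := by rw [hxz]; exact hnorm x z
    have hx0 : x = 0 := by
      by_contra hx
      have hxpos : (0 : ℝ) < ‖x‖ := norm_pos_iff.2 hx
      set x' : X := ‖x‖⁻¹ • x with hx'def
      have hx'norm : ‖x'‖ = 1 := by
        rw [hx'def, norm_smul, Real.norm_eq_abs, abs_of_pos (inv_pos.2 hxpos),
          inv_mul_cancel₀ hxpos.ne']
      have hx'mem : x' ∈ closedBall (0 : X) 1 := by
        rw [mem_closedBall_zero_iff, hx'norm]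
      have hx'not : x' ∉ Set.extremePoints ℝ (closedBall (0 : X) 1) := by
        rw [hext]; exact Set.notMem_empty _
      have hnotall : ¬ ∀ a ∈ closedBall (0 : X) 1, ∀ b ∈ closedBall (0 : X) 1,
          x' ∈ openSegment ℝ a b → a = x' ∧ b = x' := fun h => hx'not ⟨hx'mem, fun a ha b hb hs => (h a ha b hb hs).1⟩
      push_neg at hnotall
      obtain ⟨a, ha, b, hb, hseg, hne⟩ := hnotall
      obtain ⟨ta, tb, hta, htb, htab, hcomb⟩ := hseg
      set Ga : StrongDual ℝ (StrongDual ℝ X) := J (‖x‖ • a) + (z : StrongDual ℝ (StrongDual ℝ X)) with hGa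
      set Gb : StrongDual ℝ (StrongDual ℝ X) := J (‖x‖ • b) + (z : StrongDual ℝ (StrongDual ℝ X)) with hGb
      have hGanorm : ‖Ga‖ ≤ 1 := by
        rw [hGa, hnorm (‖x‖ • a) z, norm_smul, Real.norm_eq_abs, abs_of_pos hxpos]
        have ha' : ‖a‖ ≤ 1 := by rwa [mem_closedBall_zero_iff] at ha
        have hxa : ‖x‖ * ‖a‖ ≤ ‖x‖ := mul_le_of_le_one_right hxpos.le ha'
        linarith [hGeq, hGnorm]
      have hGbnorm : ‖Gb‖ ≤ 1 := by
        rw [hGb, hnorm (‖x‖ • b) z, norm_smul, Real.norm_eq_abs, abs_of_pos hxpos]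
        have hb' : ‖b‖ ≤ 1 := by rwa [mem_closedBall_zero_iff] at hb
        have hxb : ‖x‖ * ‖b‖ ≤ ‖x‖ := mul_le_of_le_one_right hxpos.le hb'
        linarith [hGeq, hGnorm]
      have hxx' : ‖x‖ • x' = x := by
        rw [hx'def, smul_inv_smul₀ hxpos.ne']
      have hxcomb : ‖x‖ • (ta • a + tb • b) = x := by rw [hcomb]; exact hxx'
      have key : ta • Ga + tb • Gb = G := by
        rw [hGa, hGb, hxz]
        conv_rhs => rw [← hxcomb]
        simp only [map_smul, map_add, smul_add, smul_smul]
        have htb' : tb = 1 - ta := by linarith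
        rw [htb']
        module
      have hFseg : F ∈ openSegment ℝ (StrongDual.toWeakDual Ga) (StrongDual.toWeakDual Gb) := by
        refine ⟨ta, tb, hta, htb, htab, ?_⟩
        rw [← map_smul, ← map_smul, ← map_add, key, hGdef]
        exact (LinearEquiv.apply_symm_apply _ _)
      have hGaB : StrongDual.toWeakDual Ga ∈ B := by
        rw [hBdef, Set.mem_preimage]
        rw [show WeakDual.toStrongDual (StrongDual.toWeakDual Ga) = Ga from rfl]
        rwa [mem_closedBall_zero_iff (E := StrongDual ℝ (StrongDual ℝ X))]
      have hGbB : StrongDual.toWeakDual Gb ∈ B := by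
        rw [hBdef, Set.mem_preimage]
        rw [show WeakDual.toStrongDual (StrongDual.toWeakDual Gb) = Gb from rfl]
        rwa [mem_closedBall_zero_iff (E := StrongDual ℝ (StrongDual ℝ X))]
      have h1 := hF.2 hGaB hGbB hFseg
      have h2 := hF.2 hGbB hGaB (by rw [openSegment_symm]; exact hFseg)
      have hGaG : Ga = G := by
        have := congrArg (WeakDual.toStrongDual (𝕜 := ℝ) (E := StrongDual ℝ X)) h1
        simpa [hGdef] using this
      have hGbG : Gb = G := by
        have := congrArg (WeakDual.toStrongDual (𝕜 := ℝ) (E := StrongDual ℝ X)) h2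
        simpa [hGdef] using this
      have hpa : (⟨‖x‖ • a, z⟩ : X × Z) = ⟨x, z⟩ := huniq _ (by rw [← hGaG])
      have hpb : (⟨‖x‖ • b, z⟩ : X × Z) = ⟨x, z⟩ := huniq _ (by rw [← hGbG])
      have haa : a = x' := by
        have h11 : ‖x‖ • a = x := congrArg Prod.fst hpa
        have h10 := congrArg (fun w => ‖x‖⁻¹ • w) h11
        simp only [inv_smul_smul₀ hxpos.ne'] at h10
        rw [hx'def]; exact h10
      have hbb : b = x' := by
        have h11 : ‖x‖ • b = x := congrArg Prod.fst hpb
        have h10 := congrArg (fun w => ‖x‖⁻¹ • w) h11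
        simp only [inv_smul_smul₀ hxpos.ne'] at h10
        rw [hx'def]; exact h10
      exact hne haa hbb
    refine ⟨hFB, ?_⟩
    rw [Set.mem_preimage]
    show (G : StrongDual ℝ (StrongDual ℝ X)) ∈ (Z : Set (StrongDual ℝ (StrongDual ℝ X)))
    rw [hxz, hx0]
    simpa using (z : Z).2
  -- Krein-Milman: B is contained in the closure of BZ
  haveI : LocallyConvexSpace ℝ (WeakDual ℝ (StrongDual ℝ X)) := by
    have := WeakBilin.locallyConvexSpace (𝕜 := ℝ) (E := StrongDual ℝ (StrongDual ℝ X)) (F := StrongDual ℝ X) (B := topDualPairing ℝ (StrongDual ℝ X))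
    exact this
  have hKM : closure (convexHull ℝ (B.extremePoints ℝ)) = B :=
    closure_convexHull_extremePoints (E := WeakDual ℝ (StrongDual ℝ X)) hBcomp hBconv
  have h1 : closure (convexHull ℝ (B.extremePoints ℝ)) ⊆ closure BZ :=
    closure_mono (convexHull_min hextB hBZconv)
  have hBsub : B ⊆ closure BZ := by rw [hKM] at h1; exact h1
  -- now prove the Daugavet property
  rintro T ⟨φ, y, hT⟩
  have hTnorm : ‖T‖ = ‖φ‖ * ‖y‖ := by rw [hT]; exact φ.norm_smulRight_apply y
  have hIdnorm : ‖ContinuousLinearMap.id ℝ (StrongDual ℝ X)‖ = 1 := ContinuousLinearMap.norm_id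
  have hupper : ‖ContinuousLinearMap.id ℝ (StrongDual ℝ X) + T‖ ≤ 1 + ‖T‖ :=
    le_trans (norm_add_le (E := StrongDual ℝ X →L[ℝ] StrongDual ℝ X) _ _) (by rw [hIdnorm])
  by_cases hy : y = 0
  · have hT0 : T = 0 := by
      rw [hT, hy]
      ext g
      simp
    rw [hT0]
    simp [hIdnorm]
  have hq : (0 : ℝ) < ‖y‖ := norm_pos_iff.2 hy
  set q : ℝ := ‖y‖ with hqdef
  obtain ⟨⟨x, z⟩, hxz, -⟩ := hdec φ
  simp only at hxz
  have hp : ‖φ‖ = ‖x‖ + ‖(z : StrongDual ℝ (StrongDual ℝ X))‖ := by rw [hxz]; exact hnorm x z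
  refine le_antisymm hupper ?_
  rw [hTnorm]
  refine le_of_forall_pos_le_add fun ε hε => ?_
  set K : ℝ := ‖x‖ + ‖(z : StrongDual ℝ (StrongDual ℝ X))‖ + 3 + q⁻¹ with hKdef
  have hKpos : (0 : ℝ) < K := by
    rw [hKdef]
    have h1 := norm_nonneg x
    have h2 := norm_nonneg (z : StrongDual ℝ (StrongDual ℝ X))
    have h3 := inv_pos.2 hq
    linarith
  set δ : ℝ := min (ε / K) (q / 2) with hδdef
  have hδpos : 0 < δ := lt_min (div_pos hε hKpos) (by linarith)
  have hδq : δ < q := lt_of_le_of_lt (min_le_right _ _) (by linarith)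
  have hδK : δ * K ≤ ε := by
    have h := min_le_left (ε / K) (q / 2)
    calc δ * K ≤ (ε / K) * K := mul_le_mul_of_nonneg_right h hKpos.le
      _ = ε := by field_simp
  -- near-norming vector for y
  obtain ⟨u, hu1, hu2⟩ := exists_unit_near_norm y hδpos
  have hu3 : y u ≤ q * ‖u‖ := by
    calc y u ≤ |y u| := le_abs_self _
      _ = ‖y u‖ := rfl
      _ ≤ ‖y‖ * ‖u‖ := y.le_opNorm u
  -- norm of J u + q • z
  have hwnorm : ‖J u + q • (z : StrongDual ℝ (StrongDual ℝ X))‖ = ‖u‖ + q * ‖(z : StrongDual ℝ (StrongDual ℝ X))‖ := by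
    have := hnorm u (q • z)
    rw [Submodule.coe_smul] at this
    rw [this, (NormedSpace.toNormSMulClass (𝕜 := ℝ) (E := StrongDual ℝ (StrongDual ℝ X))).norm_smul q (z : StrongDual ℝ (StrongDual ℝ X)), Real.norm_eq_abs, abs_of_pos hq]
  obtain ⟨g, hg1, hg2⟩ := exists_unit_near_norm (J u + q • (z : StrongDual ℝ (StrongDual ℝ X))) hδpos
  rw [hwnorm] at hg2
  have hg2' : ‖u‖ + q * ‖(z : StrongDual ℝ (StrongDual ℝ X))‖ - δ < (J u) g + q * ((z : StrongDual ℝ (StrongDual ℝ X)) g) := by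
    have : (J u + q • (z : StrongDual ℝ (StrongDual ℝ X))) g = (J u) g + q * ((z : StrongDual ℝ (StrongDual ℝ X)) g) := by
      simp [ContinuousLinearMap.add_apply]
    linarith [hg2, this ▸ hg2]
  -- the weak-star open set
  set U : Set (WeakDual ℝ (StrongDual ℝ X)) := {F | q - δ < F y ∧ (J u) g - δ < F g} with hUdef
  have hUopen : IsOpen U := by
    apply IsOpen.inter
    · exact isOpen_lt continuous_const (WeakDual.eval_continuous y)
    · exact isOpen_lt continuous_const (WeakDual.eval_continuous g)
  have hJuB : StrongDual.toWeakDual (J u) ∈ B := by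
    rw [hBdef, Set.mem_preimage]
    rw [show WeakDual.toStrongDual (StrongDual.toWeakDual (J u)) = J u from rfl]
    rw [mem_closedBall_zero_iff (E := StrongDual ℝ (StrongDual ℝ X)), normJ]
    exact hu1
  have hJuU : StrongDual.toWeakDual (J u) ∈ U := by
    constructor
    · show q - δ < (J u) y
      rw [hJdef, dual_def]
      exact hu2
    · show (J u) g - δ < (J u) g
      linarith
  obtain ⟨F, hFU, hFBZ⟩ := mem_closure_iff.1 (hBsub hJuB) U hUopen hJuU
  set G : StrongDual ℝ (StrongDual ℝ X) := WeakDual.toStrongDual F with hGdef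
  have hGnorm : ‖G‖ ≤ 1 := by
    have := hFBZ.1
    rwa [hBdef, Set.mem_preimage, mem_closedBall_zero_iff (E := StrongDual ℝ (StrongDual ℝ X))] at this
  have hGZ : G ∈ Z := hFBZ.2
  have hGy : q - δ < G y := hFU.1
  have hGg : (J u) g - δ < G g := hFU.2
  have hGyle : G y ≤ q := by
    calc G y ≤ |G y| := le_abs_self _
      _ = ‖G y‖ := rfl
      _ ≤ ‖G‖ * ‖y‖ := G.le_opNorm y
      _ ≤ 1 * q := mul_le_mul_of_nonneg_right hGnorm hq.le
      _ = q := one_mul q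
  have hGypos : 0 < G y := by linarith
  have hzg : |(z : StrongDual ℝ (StrongDual ℝ X)) g| ≤ ‖(z : StrongDual ℝ (StrongDual ℝ X))‖ := by
    calc |(z : StrongDual ℝ (StrongDual ℝ X)) g| = ‖(z : StrongDual ℝ (StrongDual ℝ X)) g‖ := rfl
      _ ≤ ‖(z : StrongDual ℝ (StrongDual ℝ X))‖ * ‖g‖ := (z : StrongDual ℝ (StrongDual ℝ X)).le_opNorm g
      _ ≤ ‖(z : StrongDual ℝ (StrongDual ℝ X))‖ * 1 := mul_le_mul_of_nonneg_left hg1 (norm_nonneg (E := StrongDual ℝ (StrongDual ℝ X)) _)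
      _ = ‖(z : StrongDual ℝ (StrongDual ℝ X))‖ := mul_one _
  -- the element W0 = G + (G y) • φ and its norm
  have hzGmem : G + G y • (z : StrongDual ℝ (StrongDual ℝ X)) ∈ Z := Z.add_mem hGZ (Z.smul_mem _ z.2)
  set W0 : StrongDual ℝ (StrongDual ℝ X) := J (G y • x) + (G + G y • (z : StrongDual ℝ (StrongDual ℝ X))) with hW0def
  have hW0norm : ‖W0‖ = ‖G y • x‖ + ‖G + G y • (z : StrongDual ℝ (StrongDual ℝ X))‖ := by
    have h9 := hnorm (G y • x) ⟨G + G y • (z : StrongDual ℝ (StrongDual ℝ X)), hzGmem⟩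
    rw [hW0def]
    exact h9
  -- lower bound on the Z-part
  have b1 : (G + G y • (z : StrongDual ℝ (StrongDual ℝ X))) g ≤ ‖G + G y • (z : StrongDual ℝ (StrongDual ℝ X))‖ := by
    calc (G + G y • (z : StrongDual ℝ (StrongDual ℝ X))) g ≤ |(G + G y • (z : StrongDual ℝ (StrongDual ℝ X))) g| := le_abs_self _
      _ = ‖(G + G y • (z : StrongDual ℝ (StrongDual ℝ X))) g‖ := rfl
      _ ≤ ‖G + G y • (z : StrongDual ℝ (StrongDual ℝ X))‖ * ‖g‖ := ContinuousLinearMap.le_opNorm _ g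
      _ ≤ ‖G + G y • (z : StrongDual ℝ (StrongDual ℝ X))‖ * 1 := mul_le_mul_of_nonneg_left hg1 (norm_nonneg (E := StrongDual ℝ (StrongDual ℝ X)) _)
      _ = ‖G + G y • (z : StrongDual ℝ (StrongDual ℝ X))‖ := mul_one _
  have bapp : (G + G y • (z : StrongDual ℝ (StrongDual ℝ X))) g = G g + G y * ((z : StrongDual ℝ (StrongDual ℝ X)) g) := by
    simp [ContinuousLinearMap.add_apply]
  have habs1 : |G y - q| ≤ δ := abs_le.2 ⟨by linarith, by linarith⟩
  have b2 : -(δ * ‖(z : StrongDual ℝ (StrongDual ℝ X))‖) ≤ (G y - q) * ((z : StrongDual ℝ (StrongDual ℝ X)) g) := by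
    have h1 : |(G y - q) * ((z : StrongDual ℝ (StrongDual ℝ X)) g)| ≤ δ * ‖(z : StrongDual ℝ (StrongDual ℝ X))‖ := by
      rw [abs_mul]
      exact mul_le_mul habs1 hzg (abs_nonneg _) hδpos.le
    linarith [neg_abs_le ((G y - q) * ((z : StrongDual ℝ (StrongDual ℝ X)) g))]
  have e2 : ‖u‖ + q * ‖(z : StrongDual ℝ (StrongDual ℝ X))‖ - 2 * δ - δ * ‖(z : StrongDual ℝ (StrongDual ℝ X))‖
      ≤ ‖G + G y • (z : StrongDual ℝ (StrongDual ℝ X))‖ := by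
    have expand : G g + G y * ((z : StrongDual ℝ (StrongDual ℝ X)) g)
        = G g + q * ((z : StrongDual ℝ (StrongDual ℝ X)) g) + (G y - q) * ((z : StrongDual ℝ (StrongDual ℝ X)) g) := by ring
    rw [bapp] at b1
    linarith [hGg, hg2', b2]
  -- norm of the first part
  have e3 : (q - δ) * ‖x‖ + ‖G + G y • (z : StrongDual ℝ (StrongDual ℝ X))‖ ≤ ‖W0‖ := by
    rw [hW0norm, norm_smul, Real.norm_eq_abs, abs_of_pos hGypos]
    have : (q - δ) * ‖x‖ ≤ G y * ‖x‖ := mul_le_mul_of_nonneg_right hGy.le (norm_nonneg x)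
    linarith
  have e4 : q - δ ≤ q * ‖u‖ := by linarith [hu2, hu3]
  have e5 : 1 - δ * q⁻¹ ≤ ‖u‖ := by
    have h6 := mul_le_mul_of_nonneg_left e4 (inv_nonneg.2 hq.le)
    have h7 : q⁻¹ * (q * ‖u‖) = ‖u‖ := by field_simp
    have h8 : q⁻¹ * (q - δ) = 1 - δ * q⁻¹ := by
      rw [mul_sub, inv_mul_cancel₀ hq.ne']; ring
    linarith [h6, h7 ▸ h6, h8]
  -- final witness
  obtain ⟨h, hh1, hh2⟩ := exists_unit_near_norm W0 hδpos
  have keyW : W0 h = G ((ContinuousLinearMap.id ℝ (StrongDual ℝ X) + T) h) := by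
    rw [hT, hW0def, hxz]
    simp only [ContinuousLinearMap.add_apply, ContinuousLinearMap.id_apply,
      ContinuousLinearMap.smulRight_apply, map_add, map_smul, smul_eq_mul,
      ContinuousLinearMap.smul_apply, hJdef, dual_def]
    ring
  have final1 : G ((ContinuousLinearMap.id ℝ (StrongDual ℝ X) + T) h)
      ≤ ‖(ContinuousLinearMap.id ℝ (StrongDual ℝ X) + T) h‖ := by
    calc G ((ContinuousLinearMap.id ℝ (StrongDual ℝ X) + T) h) ≤ |G ((ContinuousLinearMap.id ℝ (StrongDual ℝ X) + T) h)| :=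
        le_abs_self _
      _ = ‖G ((ContinuousLinearMap.id ℝ (StrongDual ℝ X) + T) h)‖ := rfl
      _ ≤ ‖G‖ * ‖(ContinuousLinearMap.id ℝ (StrongDual ℝ X) + T) h‖ := G.le_opNorm _
      _ ≤ 1 * ‖(ContinuousLinearMap.id ℝ (StrongDual ℝ X) + T) h‖ :=
        mul_le_mul_of_nonneg_right hGnorm (norm_nonneg _)
      _ = ‖(ContinuousLinearMap.id ℝ (StrongDual ℝ X) + T) h‖ := one_mul _
  have final2 : ‖(ContinuousLinearMap.id ℝ (StrongDual ℝ X) + T) h‖ ≤ ‖ContinuousLinearMap.id ℝ (StrongDual ℝ X) + T‖ := by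
    calc ‖(ContinuousLinearMap.id ℝ (StrongDual ℝ X) + T) h‖
        ≤ ‖ContinuousLinearMap.id ℝ (StrongDual ℝ X) + T‖ * ‖h‖ := ContinuousLinearMap.le_opNorm _ h
      _ ≤ ‖ContinuousLinearMap.id ℝ (StrongDual ℝ X) + T‖ * 1 := mul_le_mul_of_nonneg_left hh1 (norm_nonneg (E := StrongDual ℝ X →L[ℝ] StrongDual ℝ X) _)
      _ = ‖ContinuousLinearMap.id ℝ (StrongDual ℝ X) + T‖ := mul_one _
  have e1 : ‖W0‖ - δ ≤ ‖ContinuousLinearMap.id ℝ (StrongDual ℝ X) + T‖ := by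
    rw [keyW] at hh2
    linarith [hh2, final1, final2]
  have hδKexp : δ * K = δ * ‖x‖ + δ * ‖(z : StrongDual ℝ (StrongDual ℝ X))‖ + 3 * δ + δ * q⁻¹ := by
    rw [hKdef]; ring
  rw [hp]
  clear_value q K δ
  linarith [e1, e2, e3, e5, hδK, hδKexp]
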